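/- For integers 1 ≤ p ≤ n define (σ_{n,p})^2 := (1/4) Σ_{j=1}^{p-1} (ψ_1((n-j)/2) - ψ_1(n/2)). Then (σ_{n,p})^2 ≥ (1/2)[ -log(1 - (p-1)/n) - ((p-1)/n)(1 + 3/(2n)) ]. -/

import Mathlib

/-- The `k`-th polygamma function. -/
noncomputable def polygamma (k : ℕ) (x : ℝ) : ℝ :=
  iteratedDeriv (k + 1) (fun y => Real.log (Real.Gamma y)) x

section VarianceAux
open Real Filter Topology Set


noncomputable def trigamma (x : ℝ) : ℝ := ∑' m : ℕ, 1 / (x + m)^2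

noncomputable def psiR (x : ℝ) : ℝ :=
  -Real.eulerMascheroniConstant + ∑' m : ℕ, (1/((m:ℝ)+1) - 1/(x+m))

lemma base_summable : Summable (fun m : ℕ => 1 / ((m:ℝ) + 1)^2) := by
  have h : Summable (fun n : ℕ => 1 / (n:ℝ)^2) :=
    summable_one_div_nat_pow.mpr (by norm_num)
  have := (summable_nat_add_iff 1).mpr h
  simpa using this

lemma compact_bound {K : Set ℝ} (hK : K ⊆ Ioi 0) (hc : IsCompact K) :
    ∃ a b : ℝ, 0 < a ∧ a ≤ 1 ∧ ∀ x ∈ K, a ≤ x ∧ x ≤ b := by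
  rcases K.eq_empty_or_nonempty with rfl | hne
  · exact ⟨1, 0, one_pos, le_refl _, by simp⟩
  · obtain ⟨lo, hlo, hlo'⟩ := hc.exists_isMinOn hne (continuousOn_id)
    obtain ⟨hi, hhi, hhi'⟩ := hc.exists_isMaxOn hne (continuousOn_id)
    refine ⟨min lo 1, hi, lt_min (hK hlo) one_pos, min_le_right _ _, fun x hx => ⟨?_, hhi' hx⟩⟩
    exact le_trans (min_le_left _ _) (hlo' hx)

lemma tlu_partial (h : ℕ → ℝ → ℝ)
    (hb : ∀ K, K ⊆ Ioi 0 → IsCompact K → ∃ u : ℕ → ℝ, Summable u ∧ ∀ m x, x ∈ K → |h m x| ≤ u m) :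
    TendstoLocallyUniformlyOn (fun n x => ∑ m ∈ Finset.range (n+1), h m x)
      (fun x => ∑' m, h m x) atTop (Ioi 0) := by
  rw [tendstoLocallyUniformlyOn_iff_forall_isCompact isOpen_Ioi]
  intro K hK hc
  obtain ⟨u, hu, hbd⟩ := hb K hK hc
  have H := tendstoUniformlyOn_tsum_nat hu (f := h) (s := K) (fun m x hx => by
    simpa using hbd m x hx)
  intro v hv
  exact (tendsto_add_atTop_nat 1).eventually (H v hv)

lemma aux_denom {a : ℝ} (ha : 0 < a) (ha1 : a ≤ 1) (m : ℕ) : a * ((m:ℝ)+1) ≤ a + m := by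
  have : (0:ℝ) ≤ m := Nat.cast_nonneg m
  nlinarith

lemma tlu_T : TendstoLocallyUniformlyOn (fun n x => ∑ m ∈ Finset.range (n+1), 1/(x+(m:ℝ))^2)
    trigamma atTop (Ioi 0) := by
  apply tlu_partial
  intro K hK hc
  obtain ⟨a, b, ha, ha1, hab⟩ := compact_bound hK hc
  refine ⟨fun m => (1/a^2) * (1/((m:ℝ)+1)^2), base_summable.mul_left _, fun m x hx => ?_⟩
  obtain ⟨hax, hxb⟩ := hab x hx
  have h1 : a * ((m:ℝ)+1) ≤ x + m := le_trans (aux_denom ha ha1 m) (by linarith)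
  have h2 : (0:ℝ) < a * ((m:ℝ)+1) := by positivity
  have h3 : (0:ℝ) < x + m := lt_of_lt_of_le h2 h1
  rw [abs_of_nonneg (by positivity)]
  calc 1/(x+(m:ℝ))^2 ≤ 1/(a*((m:ℝ)+1))^2 := by
        apply one_div_le_one_div_of_le (by positivity)
        exact pow_le_pow_left₀ h2.le h1 2
    _ = (1/a^2) * (1/((m:ℝ)+1)^2) := by rw [mul_pow]; field_simp

lemma tlu_G0 : TendstoLocallyUniformlyOn
    (fun n x => ∑ m ∈ Finset.range (n+1), (1/((m:ℝ)+1) - 1/(x+(m:ℝ))))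
    (fun x => ∑' m : ℕ, (1/((m:ℝ)+1) - 1/(x+m))) atTop (Ioi 0) := by
  apply tlu_partial
  intro K hK hc
  obtain ⟨a, b, ha, ha1, hab⟩ := compact_bound hK hc
  refine ⟨fun m => ((b+1)/a) * (1/((m:ℝ)+1)^2), base_summable.mul_left _, fun m x hx => ?_⟩
  obtain ⟨hax, hxb⟩ := hab x hx
  have hx0 : 0 < x := lt_of_lt_of_le ha hax
  have h1 : a * ((m:ℝ)+1) ≤ x + m := le_trans (aux_denom ha ha1 m) (by linarith)
  have hm1 : (0:ℝ) < (m:ℝ)+1 := by positivity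
  have h3 : (0:ℝ) < x + m := lt_of_lt_of_le (by positivity) h1
  have key : 1/((m:ℝ)+1) - 1/(x+(m:ℝ)) = (x-1)/(((m:ℝ)+1)*(x+m)) := by
    field_simp; ring
  rw [key, abs_div, abs_of_pos (show (0:ℝ) < ((m:ℝ)+1)*(x+(m:ℝ)) by positivity)]
  have hnum : |x - 1| ≤ b + 1 := by
    rw [abs_le]; constructor <;> nlinarith
  have hden : a * ((m:ℝ)+1)^2 ≤ ((m:ℝ)+1) * (x+m) := by
    calc a * ((m:ℝ)+1)^2 = ((m:ℝ)+1) * (a * ((m:ℝ)+1)) := by ring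
    _ ≤ ((m:ℝ)+1) * (x+m) := by nlinarith
  calc |x-1| / (((m:ℝ)+1)*(x+m)) ≤ (b+1) / (a * ((m:ℝ)+1)^2) := by
        apply div_le_div₀ (by linarith) hnum (by positivity) hden
    _ = ((b+1)/a) * (1/((m:ℝ)+1)^2) := by field_simp

lemma hasDerivAt_F (n : ℕ) {x : ℝ} (hx : 0 < x) :
    HasDerivAt (fun y => Real.BohrMollerup.logGammaSeq y n)
      (Real.log n - ∑ m ∈ Finset.range (n+1), 1/(x+(m:ℝ))) x := by
  have hsum : HasDerivAt (fun y : ℝ => ∑ m ∈ Finset.range (n+1), Real.log (y + m))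
      (∑ m ∈ Finset.range (n+1), 1/(x+(m:ℝ))) x := by
    apply HasDerivAt.fun_sum
    intro m _
    have hxm : x + (m:ℝ) ≠ 0 := by positivity
    have := (Real.hasDerivAt_log hxm).comp x ((hasDerivAt_id x).add_const (m:ℝ))
    exact this.congr_deriv (by simp)
  have hlin : HasDerivAt (fun y : ℝ => y * Real.log n + Real.log (n.factorial : ℝ)) (Real.log n) x := by
    simpa using ((hasDerivAt_id x).mul_const (Real.log n)).add_const (Real.log (n.factorial : ℝ))
  unfold Real.BohrMollerup.logGammaSeq
  exact hlin.sub hsum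

lemma hasDerivAt_G (n : ℕ) {x : ℝ} (hx : 0 < x) :
    HasDerivAt (fun y => Real.log n - ∑ m ∈ Finset.range (n+1), 1/(y+(m:ℝ)))
      (∑ m ∈ Finset.range (n+1), 1/(x+(m:ℝ))^2) x := by
  have hsum : HasDerivAt (fun y : ℝ => ∑ m ∈ Finset.range (n+1), 1/(y+(m:ℝ)))
      (∑ m ∈ Finset.range (n+1), -(1/(x+(m:ℝ))^2)) x := by
    apply HasDerivAt.fun_sum
    intro m _
    have hxm : x + (m:ℝ) ≠ 0 := by positivity
    have := ((hasDerivAt_id x).add_const (m:ℝ)).inv hxm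
    simp only [one_div]
    exact this.congr_deriv (by simp only [id]; ring)
  have := (hasDerivAt_const x (Real.log n)).sub hsum
  exact this.congr_deriv (by simp)

lemma G_eq (n : ℕ) (x : ℝ) :
    (Real.log n - ((harmonic (n+1) : ℚ):ℝ)) + ∑ m ∈ Finset.range (n+1), (1/((m:ℝ)+1) - 1/(x+(m:ℝ)))
    = Real.log n - ∑ m ∈ Finset.range (n+1), 1/(x+(m:ℝ)) := by
  rw [Finset.sum_sub_distrib]
  have : (harmonic (n+1) : ℝ) = ∑ m ∈ Finset.range (n+1), 1/((m:ℝ)+1) := by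
    rw [harmonic]
    push_cast
    simp [one_div]
  rw [this]; ring

lemma tendsto_c : Filter.Tendsto (fun n : ℕ => Real.log n - ((harmonic (n+1) : ℚ):ℝ)) atTop
    (𝓝 (-Real.eulerMascheroniConstant)) := by
  have h1 := Real.tendsto_harmonic_sub_log.comp (tendsto_add_atTop_nat 1)
  have h1' : Filter.Tendsto (fun n : ℕ => ((harmonic (n+1) : ℚ):ℝ) - Real.log ((n:ℝ)+1)) atTop
      (𝓝 Real.eulerMascheroniConstant) := by
    refine Filter.Tendsto.congr (fun n => ?_) h1
    rw [Function.comp_apply, Nat.cast_add, Nat.cast_one]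
  have h2 : Filter.Tendsto (fun n : ℕ => Real.log ((n:ℝ)+1) - Real.log n) atTop (𝓝 0) :=
    Real.tendsto_log_nat_add_one_sub_log
  have h3 := (h1'.add h2).neg
  rw [add_zero] at h3
  exact Filter.Tendsto.congr (fun n => by ring) h3

lemma tuo_const {c : ℕ → ℝ} {L : ℝ} (h : Filter.Tendsto c atTop (𝓝 L)) (K : Set ℝ) :
    TendstoUniformlyOn (fun n (_ : ℝ) => c n) (fun _ => L) atTop K := by
  rw [Metric.tendstoUniformlyOn_iff]
  intro ε hε
  filter_upwards [Metric.tendsto_nhds.mp h ε hε] with n hn x _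
  rwa [dist_comm]

lemma tlu_G : TendstoLocallyUniformlyOn
    (fun (n : ℕ) (x : ℝ) => Real.log n - ∑ m ∈ Finset.range (n+1), 1/(x+(m:ℝ)))
    psiR atTop (Ioi 0) := by
  have heq : (fun (n : ℕ) (x : ℝ) => (Real.log n - ((harmonic (n+1) : ℚ):ℝ))
      + ∑ m ∈ Finset.range (n+1), (1/((m:ℝ)+1) - 1/(x+(m:ℝ))))
      = fun (n : ℕ) (x : ℝ) => Real.log n - ∑ m ∈ Finset.range (n+1), 1/(x+(m:ℝ)) := by
    funext n x; exact G_eq n x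
  rw [← heq]
  rw [tendstoLocallyUniformlyOn_iff_forall_isCompact isOpen_Ioi]
  intro K hK hc
  have hP := (tendstoLocallyUniformlyOn_iff_forall_isCompact isOpen_Ioi).mp tlu_G0 K hK hc
  have := (tuo_const tendsto_c K).add hP
  exact this

lemma hasDerivAt_psiR {x : ℝ} (hx : 0 < x) : HasDerivAt psiR (trigamma x) x := by
  refine hasDerivAt_of_tendstoLocallyUniformlyOn (ι := ℕ) (l := atTop) isOpen_Ioi tlu_T
      (f := fun (n : ℕ) (y : ℝ) => Real.log n - ∑ m ∈ Finset.range (n+1), 1/(y+(m:ℝ)))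
      ?_ ?_ hx
  · exact Filter.Eventually.of_forall fun n y hy => hasDerivAt_G n hy
  · exact fun y hy => tlu_G.tendsto_at hy

lemma hasDerivAt_logGamma {x : ℝ} (hx : 0 < x) :
    HasDerivAt (fun y => Real.log (Real.Gamma y)) (psiR x) x := by
  refine hasDerivAt_of_tendstoLocallyUniformlyOn (ι := ℕ) (l := atTop) isOpen_Ioi tlu_G
      (f := fun (n : ℕ) (y : ℝ) => Real.BohrMollerup.logGammaSeq y n) ?_ ?_ hx
  · exact Filter.Eventually.of_forall fun n y hy => hasDerivAt_F n hy
  · exact fun y hy => Real.BohrMollerup.tendsto_log_gamma hy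

lemma polygamma_one_eq {x : ℝ} (hx : 0 < x) : polygamma 1 x = trigamma x := by
  have hev : deriv (fun y => Real.log (Real.Gamma y)) =ᶠ[𝓝 x] psiR := by
    filter_upwards [isOpen_Ioi.mem_nhds (show x ∈ Ioi (0:ℝ) from hx)] with y hy
    exact (hasDerivAt_logGamma hy).deriv
  show iteratedDeriv (1+1) (fun y => Real.log (Real.Gamma y)) x = trigamma x
  rw [iteratedDeriv_succ, iteratedDeriv_one, hev.deriv_eq]
  exact (hasDerivAt_psiR hx).deriv

lemma summable_trig {x : ℝ} (hx : 0 < x) : Summable (fun m : ℕ => 1 / (x + (m:ℝ))^2) := by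
  have ha0 : 0 < min x 1 := lt_min hx one_pos
  have ha1 : min x 1 ≤ 1 := min_le_right _ _
  refine Summable.of_nonneg_of_le (fun m => by positivity) (fun m => ?_)
    (base_summable.mul_left (1/(min x 1)^2))
  have h1 : min x 1 * ((m:ℝ)+1) ≤ x + m := by
    refine le_trans (aux_denom ha0 ha1 m) ?_
    have := min_le_left x 1
    linarith
  calc 1/(x+(m:ℝ))^2 ≤ 1/(min x 1*((m:ℝ)+1))^2 := by
        apply one_div_le_one_div_of_le (by positivity)
        exact pow_le_pow_left₀ (by positivity) h1 2
    _ = (1/(min x 1)^2) * (1/((m:ℝ)+1)^2) := by rw [mul_pow]; field_simp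

lemma tendsto_one_div_shift {x : ℝ} (hx : 0 < x) :
    Filter.Tendsto (fun N : ℕ => 1/(x + (N:ℝ))) atTop (𝓝 0) := by
  have h : Filter.Tendsto (fun N : ℕ => x + (N:ℝ)) atTop atTop :=
    Filter.tendsto_atTop_add_const_left _ x tendsto_natCast_atTop_atTop
  exact h.inv_tendsto_atTop.congr (fun N => by simp [one_div])

lemma trigamma_lower {x : ℝ} (hx : 1/2 ≤ x) : 1/x + 1/(2*x^2) ≤ trigamma x := by
  have hx0 : 0 < x := by linarith
  have hsum := summable_trig hx0
  have hpartial : ∀ N : ℕ, (1/x - 1/(x+(N:ℝ))) + (1/2)*(1/x^2 - 1/(x+(N:ℝ))^2)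
      ≤ ∑ m ∈ Finset.range N, 1/(x+(m:ℝ))^2 := by
    intro N
    induction N with
    | zero => simp
    | succ N ih =>
      rw [Finset.sum_range_succ]
      have hN : (0:ℝ) ≤ N := Nat.cast_nonneg N
      have key : (1/(x+(N:ℝ)) - 1/(x+(N:ℝ)+1)) + (1/2)*(1/(x+(N:ℝ))^2 - 1/(x+(N:ℝ)+1)^2)
          ≤ 1/(x+(N:ℝ))^2 := by
        set t := x + (N:ℝ) with hdef
        have ht0 : 0 < t := by rw [hdef]; linarith
        have ht1 : 0 < t + 1 := by linarith
        have e : 1/t^2 - ((1/t - 1/(t+1)) + (1/2)*(1/t^2 - 1/(t+1)^2))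
            = 1/(2*t^2*(t+1)^2) := by
          field_simp
          ring
        have hpos : (0:ℝ) ≤ 1/(2*t^2*(t+1)^2) := by positivity
        linarith
      push_cast
      rw [show x + ((N:ℝ)+1) = x + (N:ℝ)+1 from by ring]
      linarith
  have h0 := tendsto_one_div_shift hx0
  have h0sq : Filter.Tendsto (fun N : ℕ => 1/(x+(N:ℝ))^2) atTop (𝓝 0) := by
    have := h0.mul h0
    rw [mul_zero] at this
    exact this.congr fun N => by rw [one_div_mul_one_div, ← pow_two]
  have hR := (tendsto_const_nhds (x := 1/x) (f := atTop (α := ℕ))).sub h0 |>.add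
      (((tendsto_const_nhds (x := 1/x^2) (f := atTop (α := ℕ))).sub h0sq).const_mul (1/2))
  have hle := le_of_tendsto_of_tendsto' hR hsum.hasSum.tendsto_sum_nat hpartial
  have he : 1/(2*x^2) = 1/2*(1/x^2) := by ring
  rw [trigamma]
  linarith

lemma trigamma_upper {x : ℝ} (hx : 1/2 ≤ x) : trigamma x ≤ 1/x + 1/x^2 := by
  have hx0 : 0 < x := by linarith
  have hsum := summable_trig hx0
  have hpartial : ∀ N : ℕ, ∑ m ∈ Finset.range (N+1), 1/(x+(m:ℝ))^2
      ≤ 1/x^2 + (1/x - 1/(x+(N:ℝ))) := by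
    intro N
    induction N with
    | zero => simp
    | succ N ih =>
      rw [Finset.sum_range_succ]
      have hN : (0:ℝ) ≤ N := Nat.cast_nonneg N
      have h1 : (0:ℝ) < x + (N:ℝ) := by linarith
      have h2 : (0:ℝ) < x + (N:ℝ) + 1 := by linarith
      have key : 1/(x+(N:ℝ)+1)^2 ≤ 1/(x+(N:ℝ)) - 1/(x+(N:ℝ)+1) := by
        have e : 1/(x+(N:ℝ)) - 1/(x+(N:ℝ)+1) = 1/((x+(N:ℝ))*(x+(N:ℝ)+1)) := by
          field_simp
          ring
        rw [e]
        apply one_div_le_one_div_of_le (by positivity)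
        nlinarith
      push_cast
      rw [show x + ((N:ℝ)+1) = x + (N:ℝ)+1 from by ring]
      linarith
  have hT : Filter.Tendsto (fun N : ℕ => ∑ m ∈ Finset.range (N+1), 1/(x+(m:ℝ))^2) atTop
      (𝓝 (trigamma x)) :=
    hsum.hasSum.tendsto_sum_nat.comp (tendsto_add_atTop_nat 1)
  apply le_of_tendsto hT
  filter_upwards with N
  have hN : (0:ℝ) ≤ N := Nat.cast_nonneg N
  have h1 : (0:ℝ) < x + (N:ℝ) := by linarith
  have h2 : (0:ℝ) ≤ 1/(x+(N:ℝ)) := by positivity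
  linarith [hpartial N]

lemma telescope_log (n q : ℕ) (h : q < n) :
    ∑ j ∈ Finset.Icc 1 q, (Real.log ((n:ℝ)-(j:ℝ)+1) - Real.log ((n:ℝ)-(j:ℝ)))
      = Real.log n - Real.log ((n:ℝ)-(q:ℝ)) := by
  induction q with
  | zero => simp
  | succ q ih =>
    rw [Finset.sum_Icc_succ_top (by omega : 1 ≤ q+1), ih (by omega)]
    push_cast
    rw [show (n:ℝ) - ((q:ℝ)+1) + 1 = (n:ℝ) - q from by ring]
    ring


end VarianceAux

/-- Lower bound for the variance of the log-volume of a spherical random simplex: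
for `1 ≤ p ≤ n`,
`σ²_{n,p} := (1/4) Σ_{j=1}^{p-1} (ψ₁((n-j)/2) - ψ₁(n/2))`
satisfies `σ²_{n,p} ≥ (1/2)[-log(1-(p-1)/n) - ((p-1)/n)(1 + 3/(2n))]`. -/
theorem variance_lower_bound (p n : ℕ) (hp : 1 ≤ p) (hpn : p ≤ n) :
    (1/2 : ℝ) * (-Real.log (1 - ((p:ℝ) - 1)/n)
        - (((p:ℝ) - 1)/n) * (1 + 3/(2 * (n:ℝ))))
      ≤ (1/4 : ℝ) * ∑ j ∈ Finset.Icc 1 (p - 1),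
          (polygamma 1 (((n:ℝ) - (j:ℝ))/2) - polygamma 1 ((n:ℝ)/2)) := by
  have hn1 : 1 ≤ n := le_trans hp hpn
  have hn0 : (0:ℝ) < n := by exact_mod_cast hn1
  set q : ℕ := p - 1 with hq
  have hqn : q < n := by omega
  have hcast : ((q:ℕ):ℝ) = (p:ℝ) - 1 := by rw [hq, Nat.cast_sub hp]; norm_num
  have hnq : (0:ℝ) < (n:ℝ) - q := by
    have h1 : q + 1 ≤ n := hqn
    have h2 := (Nat.cast_le (α := ℝ)).mpr h1
    push_cast at h2; linarith
  have claim : ∀ j ∈ Finset.Icc 1 q,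
      2*(Real.log ((n:ℝ)-(j:ℝ)+1) - Real.log ((n:ℝ)-(j:ℝ))) - 2/(n:ℝ) - 3/(n:ℝ)^2
        ≤ polygamma 1 (((n:ℝ)-(j:ℝ))/2) - polygamma 1 ((n:ℝ)/2) := by
    intro j hj
    rw [Finset.mem_Icc] at hj
    have hj1 : (1:ℝ) ≤ (n:ℝ) - j := by
      have h1 : j + 1 ≤ n := by omega
      have h2 := (Nat.cast_le (α := ℝ)).mpr h1
      push_cast at h2; linarith
    have hjn : (n:ℝ) - j ≤ n := by
      have : (0:ℝ) ≤ j := Nat.cast_nonneg j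
      linarith
    set y := (n:ℝ) - (j:ℝ) with hy
    clear_value y
    have hy0 : 0 < y := by linarith
    have hyhalf : (1:ℝ)/2 ≤ y/2 := by linarith
    have hnhalf : (1:ℝ)/2 ≤ (n:ℝ)/2 := by linarith
    rw [polygamma_one_eq (by linarith : (0:ℝ) < y/2),
        polygamma_one_eq (by linarith : (0:ℝ) < (n:ℝ)/2)]
    have hlow := trigamma_lower hyhalf
    have hup := trigamma_upper hnhalf
    have e1 : 1/(y/2) + 1/(2*(y/2)^2) = 2/y + 2/y^2 := by
      rw [one_div_div, show (2:ℝ)*(y/2)^2 = y^2/2 from by ring, one_div_div]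
    have e2 : 1/((n:ℝ)/2) + 1/((n:ℝ)/2)^2 = 2/(n:ℝ) + 4/(n:ℝ)^2 := by
      rw [one_div_div, div_pow, one_div_div]
      norm_num
    rw [e1] at hlow
    rw [e2] at hup
    have hlb : Real.log (y+1) - Real.log y ≤ 1/y := by
      have h := Real.log_le_sub_one_of_pos (show (0:ℝ) < (y+1)/y by positivity)
      rw [Real.log_div (by linarith) (ne_of_gt hy0)] at h
      have : (y+1)/y - 1 = 1/y := by field_simp; ring
      linarith
    have hsq : 1/(n:ℝ)^2 ≤ 1/y^2 := by
      apply one_div_le_one_div_of_le (by positivity)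
      exact pow_le_pow_left₀ (by linarith) hjn 2
    have hy2 : (0:ℝ) ≤ 1/y^2 := by positivity
    ring_nf at hlow hup hlb hsq hy2 ⊢
    linarith
  have hsum_le := Finset.sum_le_sum claim
  have hsum_eq : ∑ j ∈ Finset.Icc 1 q,
      (2*(Real.log ((n:ℝ)-(j:ℝ)+1) - Real.log ((n:ℝ)-(j:ℝ))) - 2/(n:ℝ) - 3/(n:ℝ)^2)
      = 2*(Real.log n - Real.log ((n:ℝ)-(q:ℝ))) - (q:ℝ)*(2/(n:ℝ)+3/(n:ℝ)^2) := by
    rw [Finset.sum_sub_distrib, Finset.sum_sub_distrib, ← Finset.mul_sum,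
        telescope_log n q hqn, Finset.sum_const, Finset.sum_const, Nat.card_Icc,
        Nat.add_sub_cancel, nsmul_eq_mul, nsmul_eq_mul]
    ring
  have key : 2*(Real.log n - Real.log ((n:ℝ)-(q:ℝ))) - (q:ℝ)*(2/(n:ℝ)+3/(n:ℝ)^2)
      ≤ ∑ j ∈ Finset.Icc 1 q, (polygamma 1 (((n:ℝ)-(j:ℝ))/2) - polygamma 1 ((n:ℝ)/2)) :=
    hsum_eq ▸ hsum_le
  have hlog : Real.log (1 - ((p:ℝ)-1)/n) = Real.log ((n:ℝ)-(q:ℝ)) - Real.log n := by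
    rw [← hcast, show 1 - (q:ℝ)/n = ((n:ℝ)-(q:ℝ))/n from by field_simp]
    exact Real.log_div (ne_of_gt hnq) (ne_of_gt hn0)
  rw [hlog, ← hcast]
  have hexp : (1/2:ℝ) * (-(Real.log ((n:ℝ)-(q:ℝ)) - Real.log n) - ((q:ℝ)/n)*(1+3/(2*(n:ℝ))))
      = (1/4:ℝ) * (2*(Real.log n - Real.log ((n:ℝ)-(q:ℝ))) - (q:ℝ)*(2/(n:ℝ)+3/(n:ℝ)^2)) := by
    ring
  linarith [key, hexp]
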